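/- For n = 2, write A_t ∈ SO(2,ℝ) as the rotation by angle θ_t ∈ (−π/2, π/2). Then one step of the MSP iteration A_{t+1} = P_{SO(2)}(A_t^{∘3}) (projection of the entrywise cube onto SO(2) via the polar factor) gives a rotation by angle θ_{t+1} satisfying tan θ_{t+1} = tan³ θ_t. -/

import Mathlib

open Matrix Real

/-- Rotation of the plane by angle `θ`. -/
noncomputable def rot (θ : ℝ) : Matrix (Fin 2) (Fin 2) ℝ :=
  !![Real.cos θ, -Real.sin θ; Real.sin θ, Real.cos θ]

/-- Entrywise cube of a matrix. -/
def cube (W : Matrix (Fin 2) (Fin 2) ℝ) : Matrix (Fin 2) (Fin 2) ℝ :=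
  fun i j => W i j ^ 3

/-- The squared Frobenius norm of a matrix. -/
def frobSq (A : Matrix (Fin 2) (Fin 2) ℝ) : ℝ :=
  ∑ i, ∑ j, A i j ^ 2

lemma rot_orth (α : ℝ) : (rot α)ᵀ * rot α = 1 := by
  ext i j
  fin_cases i <;> fin_cases j <;>
    simp [rot, Matrix.mul_apply, Fin.sum_univ_two, Matrix.one_apply,
      Matrix.vecHead, Matrix.vecTail] <;>
    nlinarith [Real.sin_sq_add_cos_sq α]

lemma rot_det (α : ℝ) : (rot α).det = 1 := by
  simp [rot, Matrix.det_fin_two]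
  nlinarith [Real.sin_sq_add_cos_sq α]

lemma frob_expand (α θ : ℝ) :
    frobSq (rot α - cube (rot θ)) =
      2 * (1 + (Real.cos θ ^ 3) ^ 2 + (Real.sin θ ^ 3) ^ 2)
        - 4 * (Real.cos θ ^ 3 * Real.cos α + Real.sin θ ^ 3 * Real.sin α) := by
  simp [frobSq, rot, cube, Fin.sum_univ_two]
  nlinarith [Real.sin_sq_add_cos_sq α]

/-- One step of the MSP iteration on `SO(2;ℝ)`: if `A_t` is the rotation by
`θ ∈ (-π/2, π/2)` and the rotation by `ψ` is the projection of `A_t^{∘3}` onto `SO(2)`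
(the minimizer of the Frobenius distance among special orthogonal matrices), then
`tan ψ = tan³ θ`. -/
theorem msp_so2_tan_cube (θ ψ : ℝ)
    (hθ : θ ∈ Set.Ioo (-(π / 2)) (π / 2))
    (hmin : ∀ M : Matrix (Fin 2) (Fin 2) ℝ, Mᵀ * M = 1 → M.det = 1 →
      frobSq (rot ψ - cube (rot θ)) ≤ frobSq (M - cube (rot θ))) :
    Real.tan ψ = Real.tan θ ^ 3 := by
  obtain ⟨h1, h2⟩ := hθ
  have hcθ : 0 < Real.cos θ := Real.cos_pos_of_mem_Ioo ⟨h1, h2⟩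
  have hcpos : (0:ℝ) < Real.cos θ ^ 3 := by positivity
  set c : ℝ := Real.cos θ ^ 3 with hc
  set s : ℝ := Real.sin θ ^ 3 with hs
  set t : ℝ := s / c with ht
  set φ₀ : ℝ := Real.arctan t with hφ₀
  have hkey := hmin (rot φ₀) (rot_orth φ₀) (rot_det φ₀)
  rw [frob_expand, frob_expand] at hkey
  simp only [← hc, ← hs] at hkey
  have hf : c * Real.cos ψ + s * Real.sin ψ ≥ c * Real.cos φ₀ + s * Real.sin φ₀ := by
    linarith
  have hcosφ : Real.cos φ₀ = 1 / Real.sqrt (1 + t ^ 2) := Real.cos_arctan t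
  have hsinφ : Real.sin φ₀ = t / Real.sqrt (1 + t ^ 2) := Real.sin_arctan t
  have hsq : Real.sqrt (1 + t ^ 2) ^ 2 = 1 + t ^ 2 := Real.sq_sqrt (by positivity)
  have hsqpos : 0 < Real.sqrt (1 + t ^ 2) := Real.sqrt_pos.2 (by positivity)
  have hfval : (c * Real.cos φ₀ + s * Real.sin φ₀) ^ 2 = c ^ 2 + s ^ 2 := by
    rw [hcosφ, hsinφ, ht]
    field_simp
    rw [Real.sq_sqrt (by positivity)]
    field_simp
  have hfnonneg : 0 ≤ c * Real.cos φ₀ + s * Real.sin φ₀ := by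
    rw [hcosφ, hsinφ]
    have hst : 0 ≤ s * t := by
      rw [ht, mul_div_assoc']
      exact div_nonneg (mul_self_nonneg s) hcpos.le
    have h1' : 0 ≤ c * (1 / Real.sqrt (1 + t ^ 2)) := by positivity
    have h2' : s * (t / Real.sqrt (1 + t ^ 2)) = (s * t) / Real.sqrt (1 + t ^ 2) := by
      ring
    rw [h2']
    have := div_nonneg hst hsqpos.le
    linarith
  have hpyth := Real.sin_sq_add_cos_sq ψ
  have hid : (c * Real.cos ψ + s * Real.sin ψ) ^ 2
      + (s * Real.cos ψ - c * Real.sin ψ) ^ 2 = c ^ 2 + s ^ 2 := by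
    linear_combination (c ^ 2 + s ^ 2) * hpyth
  have hle : (c * Real.cos φ₀ + s * Real.sin φ₀) ^ 2
      ≤ (c * Real.cos ψ + s * Real.sin ψ) ^ 2 := by
    rw [sq, sq]; exact mul_self_le_mul_self hfnonneg hf
  have hgsq : (s * Real.cos ψ - c * Real.sin ψ) ^ 2 ≤ 0 := by linarith
  have hzero : s * Real.cos ψ - c * Real.sin ψ = 0 := by
    have h0 := sq_nonneg (s * Real.cos ψ - c * Real.sin ψ)
    have : (s * Real.cos ψ - c * Real.sin ψ) ^ 2 = 0 := le_antisymm hgsq h0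
    exact pow_eq_zero_iff (two_ne_zero) |>.1 this
  have hcψ : Real.cos ψ ≠ 0 := by
    intro h
    have hsψ : Real.sin ψ = 0 := by
      have := hzero; rw [h] at this
      have : c * Real.sin ψ = 0 := by linarith
      exact (mul_eq_zero.1 this).resolve_left hcpos.ne'
    rw [h, hsψ] at hpyth; norm_num at hpyth
  simp only [hc, hs] at hzero
  rw [Real.tan_eq_sin_div_cos, Real.tan_eq_sin_div_cos]
  field_simp
  linarith [hzero]
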